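/- Let (E,d) be a hemi-metric space whose symmetrized metric topology is compact, and let G be a Shapley operator (monotone and additively homogeneous) preserving Lip₁(E) and continuous for the topology of uniform convergence on compact sets. Then there exist v ∈ Lip₁(E) and λ ∈ ℝ such that G(v) = λ + v. -/

import Mathlib

open Set Filter
open scoped BoundedContinuousFunction

/-- a Shapley operator (monotone, additively homogeneous) preserving
`Lip₁(E)` on a compact hemi-metric space `E`, continuous for the topology of uniform
convergence (on compact sets), admits an additive eigenpair. The hemi-metric space
`(E, d)` is encoded by a compact metric space `E` whose distance is the symmetrization
of the hemi-metric `d`. -/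
theorem stmt_13 {E : Type*} [MetricSpace E] [CompactSpace E] [Nonempty E]
    (d : E → E → ℝ)
    (htri : ∀ x y z, d x z ≤ d x y + d y z)
    (hcompat : ∀ x y, dist x y = max (d x y) (d y x))
    (G : (E → ℝ) → E → ℝ)
    (hmono : ∀ u w : E → ℝ, (∀ x, u x ≤ w x) → ∀ x, G u x ≤ G w x)
    (hhom : ∀ (c : ℝ) (u : E → ℝ) (x : E), G (fun y => c + u y) x = c + G u x)
    (hlip : ∀ u : E → ℝ, (∀ x y, u x - u y ≤ d x y) → ∀ x y, G u x - G u y ≤ d x y)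
    (hcont : ∀ (u : ℕ → E → ℝ) (w : E → ℝ),
      (∀ k, ∀ x y, u k x - u k y ≤ d x y) → (∀ x y, w x - w y ≤ d x y) →
      TendstoUniformly u w atTop → TendstoUniformly (fun k => G (u k)) (G w) atTop) :
    ∃ (v : E → ℝ) (l : ℝ), (∀ x y, v x - v y ≤ d x y) ∧ ∀ x, G v x = l + v x := by
  classical
  obtain ⟨x₀⟩ := (inferInstance : Nonempty E)
  -- basic facts about the hemi-metric
  have hdle : ∀ x y, d x y ≤ dist x y := fun x y => (hcompat x y) ▸ le_max_left _ _
  have hd0 : ∀ x : E, d x x = 0 := by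
    intro x
    have h := hcompat x x
    rw [dist_self, max_self] at h
    exact h.symm
  -- Lip₁ functions are 1-Lipschitz for the symmetrized distance
  have hLL : ∀ f : E → ℝ, (∀ x y, f x - f y ≤ d x y) → LipschitzWith 1 f := by
    intro f hf
    apply LipschitzWith.of_dist_le_mul
    intro x y
    rw [Real.dist_eq, NNReal.coe_one, one_mul, abs_sub_le_iff]
    exact ⟨(hf x y).trans (hdle x y), (hf y x).trans ((hdle y x).trans_eq (dist_comm y x))⟩
  have habs : ∀ f : E → ℝ, (∀ x y, f x - f y ≤ d x y) → ∀ x y, |f x - f y| ≤ dist x y := by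
    intro f hf x y
    have := (hLL f hf).dist_le_mul x y
    rwa [Real.dist_eq, NNReal.coe_one, one_mul] at this
  -- the base point function u₀ = d · x₀
  have hu₀lip : ∀ x y : E, d x x₀ - d y x₀ ≤ d x y := by
    intro x y
    have := htri x y x₀
    linarith
  set u₀ : E →ᵇ ℝ :=
    BoundedContinuousFunction.mkOfCompact ⟨fun x => d x x₀, (hLL _ hu₀lip).continuous⟩ with hu₀
  have hu₀app : ∀ x, u₀ x = d x x₀ := fun x => rfl
  -- the set of Lip₁ bounded continuous functions
  set L : Set (E →ᵇ ℝ) := {f | ∀ x y, f x - f y ≤ d x y} with hL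
  have hLclosed : IsClosed L := by
    have : L = ⋂ (x : E) (y : E), {f : E →ᵇ ℝ | f x - f y ≤ d x y} := by
      ext f; simp [hL]
    rw [this]
    refine isClosed_iInter fun x => isClosed_iInter fun y => ?_
    exact isClosed_le ((continuous_eval_const x).sub
      (continuous_eval_const y)) continuous_const
  have hu₀L : u₀ ∈ L := fun x y => hu₀lip x y
  -- nonexpansiveness of G in the sup norm
  have hne : ∀ f g : E →ᵇ ℝ, ∀ x, |G ⇑f x - G ⇑g x| ≤ dist f g := by
    intro f g x
    have key : ∀ p q : E →ᵇ ℝ, G ⇑p x - G ⇑q x ≤ dist p q := by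
      intro p q
      have h1 : ∀ y, p y ≤ dist p q + q y := by
        intro y
        have := p.dist_coe_le_dist (g := q) y
        rw [Real.dist_eq] at this
        have := abs_le.1 this
        linarith [this.2]
      have h2 := hmono ⇑p (fun y => dist p q + q y) h1 x
      rw [hhom (dist p q) ⇑q x] at h2
      linarith
    rw [abs_sub_le_iff]
    exact ⟨key f g, (key g f).trans_eq (dist_comm g f)⟩
  -- fixed points of the damped operators
  have hfix : ∀ t : ℝ, 0 ≤ t → t < 1 → ∃ u : E →ᵇ ℝ, u ∈ L ∧
      ∀ x, u x = t * G ⇑u x + (1 - t) * u₀ x := by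
    intro t ht0 ht1
    haveI : Nonempty L := ⟨⟨u₀, hu₀L⟩⟩
    haveI : CompleteSpace L := hLclosed.completeSpace_coe
    -- the damped map
    have hGL : ∀ f : E →ᵇ ℝ, f ∈ L → ∀ x y, G ⇑f x - G ⇑f y ≤ d x y := by
      intro f hf; exact hlip ⇑f hf
    have hcontG : ∀ f : L, Continuous fun x => t * G ⇑(f : E →ᵇ ℝ) x + (1 - t) * u₀ x := by
      intro f
      exact ((continuous_const.mul (hLL _ (hGL f.1 f.2)).continuous).add
        (continuous_const.mul u₀.continuous))
    set Φ : L → L := fun f =>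
      ⟨BoundedContinuousFunction.mkOfCompact ⟨fun x => t * G ⇑(f : E →ᵇ ℝ) x + (1 - t) * u₀ x,
        hcontG f⟩, by
          intro x y
          simp only [BoundedContinuousFunction.mkOfCompact_apply, ContinuousMap.coe_mk]
          have h1 := hGL f.1 f.2 x y
          have h2 := hu₀lip x y
          have h3 : (0:ℝ) ≤ 1 - t := by linarith
          rw [hu₀app, hu₀app]
          nlinarith⟩ with hΦ
    have hcw : ContractingWith t.toNNReal Φ := by
      constructor
      · rwa [← NNReal.coe_lt_coe, Real.coe_toNNReal t ht0]
      · apply LipschitzWith.of_dist_le_mul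
        intro f g
        simp only [Subtype.dist_eq, Real.coe_toNNReal t ht0]
        have hnn : 0 ≤ t * dist (f : E →ᵇ ℝ) (g : E →ᵇ ℝ) := mul_nonneg ht0 dist_nonneg
        rw [BoundedContinuousFunction.dist_le hnn]
        intro x
        have hval : dist ((Φ f : E →ᵇ ℝ) x) ((Φ g : E →ᵇ ℝ) x)
            = |t * (G ⇑(f : E →ᵇ ℝ) x - G ⇑(g : E →ᵇ ℝ) x)| := by
          rw [Real.dist_eq, hΦ]
          simp only [BoundedContinuousFunction.mkOfCompact_apply, ContinuousMap.coe_mk]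
          ring_nf
        rw [hval, abs_mul, abs_of_nonneg ht0]
        exact mul_le_mul_of_nonneg_left (hne _ _ x) ht0
    refine ⟨(hcw.fixedPoint Φ : L), (hcw.fixedPoint Φ).2, ?_⟩
    intro x
    have := hcw.fixedPoint_isFixedPt
    have h := congrArg (fun f : L => (f : E →ᵇ ℝ) x) this
    simp only [hΦ, BoundedContinuousFunction.mkOfCompact_apply, ContinuousMap.coe_mk] at h
    exact h.symm
  -- a sequence of fixed points with damping going to 1
  have key : ∀ n : ℕ, ∃ u : E →ᵇ ℝ, u ∈ L ∧
      ∀ x, u x = (1 - 1/(n+1 : ℝ)) * G ⇑u x + (1/(n+1 : ℝ)) * u₀ x := by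
    intro n
    have h1 : (0:ℝ) < 1/(n+1) := by positivity
    have h2 : 1/(n+1:ℝ) ≤ 1 := by
      rw [div_le_one (by positivity)]
      linarith [Nat.cast_nonneg (α := ℝ) n]
    obtain ⟨u, huL, hu⟩ := hfix (1 - 1/(n+1)) (by linarith) (by linarith)
    rw [show (1:ℝ) - (1 - 1/(n+1)) = 1/(n+1) from by ring] at hu
    exact ⟨u, huL, hu⟩
  choose u huL hueq using key
  -- normalized fixed points
  set v : ℕ → E →ᵇ ℝ := fun n => u n - BoundedContinuousFunction.const E (u n x₀) with hv
  have hvapp : ∀ n x, v n x = u n x - u n x₀ := by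
    intro n x
    simp [hv]
  -- the compact set K of normalized Lip₁ functions
  set K : Set (E →ᵇ ℝ) := {f | (∀ x y, f x - f y ≤ d x y) ∧ f x₀ = 0} with hKdef
  have hKclosed : IsClosed K := by
    have : K = L ∩ {f : E →ᵇ ℝ | f x₀ = 0} := by ext f; simp [hKdef, hL]
    rw [this]
    exact hLclosed.inter (isClosed_eq (continuous_eval_const x₀)
      continuous_const)
  set R : ℝ := Metric.diam (univ : Set E) with hR
  have hinS : ∀ f : E →ᵇ ℝ, ∀ x : E, f ∈ K → f x ∈ Metric.closedBall (0:ℝ) R := by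
    intro f x hf
    rw [Metric.mem_closedBall, Real.dist_eq, sub_zero]
    have h1 : |f x - f x₀| ≤ dist x x₀ := habs ⇑f hf.1 x x₀
    have h2 : dist x x₀ ≤ R :=
      Metric.dist_le_diam_of_mem isCompact_univ.isBounded (mem_univ x) (mem_univ x₀)
    rw [hf.2] at h1
    simpa using h1.trans h2
  have hequi : Equicontinuous ((↑) : K → E → ℝ) := by
    apply Metric.equicontinuous_of_continuity_modulus id
      (by simpa using (tendsto_id : Tendsto (id : ℝ → ℝ) (nhds 0) (nhds 0)))
    intro x y f
    rw [Real.dist_eq]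
    simpa using habs ⇑(f : E →ᵇ ℝ) f.2.1 x y
  have hKcpt : IsCompact K :=
    BoundedContinuousFunction.arzela_ascoli₂ (Metric.closedBall (0:ℝ) R)
      (isCompact_closedBall 0 R) K hKclosed hinS hequi
  have hvK : ∀ n, v n ∈ K := by
    intro n
    constructor
    · intro x y
      rw [hvapp, hvapp]
      have := huL n x y
      linarith
    · rw [hvapp]; ring
  -- extract a uniformly convergent subsequence
  obtain ⟨w, hwK, φ, hφ, hconv⟩ := hKcpt.tendsto_subseq hvK
  have huconv : TendstoUniformly (fun k => ⇑(v (φ k))) ⇑w atTop :=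
    BoundedContinuousFunction.tendsto_iff_tendstoUniformly.1 hconv
  have hGconv : TendstoUniformly (fun k => G ⇑(v (φ k))) (G ⇑w) atTop :=
    hcont _ _ (fun k => (hvK (φ k)).1) hwK.1 huconv
  -- G on normalized functions
  have hGv : ∀ n x, G ⇑(v n) x = G ⇑(u n) x - u n x₀ := by
    intro n x
    have hfun : ⇑(v n) = fun y => -(u n x₀) + u n y := by
      funext y; rw [hvapp]; ring
    rw [hfun, hhom (-(u n x₀)) ⇑(u n) x]
    ring
  -- the oscillation of G v_n - v_n is small
  have hosc : ∀ n x, |(G ⇑(v n) x - v n x) - (G ⇑(v n) x₀ - v n x₀)|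
      ≤ (1/(n+1 : ℝ)) * (2 * dist x x₀) := by
    intro n x
    have h1 : ∀ z, G ⇑(v n) z - v n z = (1/(n+1:ℝ)) * (G ⇑(u n) z - u₀ z) := by
      intro z
      rw [hGv, hvapp]
      have := hueq n z
      ring_nf
      ring_nf at this
      linarith
    rw [h1 x, h1 x₀, ← mul_sub, abs_mul, abs_of_nonneg (by positivity : (0:ℝ) ≤ 1/(n+1:ℝ))]
    apply mul_le_mul_of_nonneg_left _ (by positivity)
    have hGlip : ∀ a b, G ⇑(u n) a - G ⇑(u n) b ≤ d a b := hlip ⇑(u n) (huL n)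
    have h2 : |G ⇑(u n) x - G ⇑(u n) x₀| ≤ dist x x₀ := habs _ hGlip x x₀
    have h3 : |u₀ x - u₀ x₀| ≤ dist x x₀ := habs ⇑u₀ hu₀L x x₀
    calc |(G ⇑(u n) x - u₀ x) - (G ⇑(u n) x₀ - u₀ x₀)|
        = |(G ⇑(u n) x - G ⇑(u n) x₀) - (u₀ x - u₀ x₀)| := by ring_nf
      _ ≤ |G ⇑(u n) x - G ⇑(u n) x₀| + |u₀ x - u₀ x₀| := abs_sub _ _
      _ ≤ 2 * dist x x₀ := by linarith
  -- pass to the limit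
  have hmain : ∀ x, (G ⇑w x - w x) - (G ⇑w x₀ - w x₀) = 0 := by
    intro x
    set a : ℕ → ℝ := fun k =>
      (G ⇑(v (φ k)) x - v (φ k) x) - (G ⇑(v (φ k)) x₀ - v (φ k) x₀) with ha
    have hlim1 : Tendsto a atTop (nhds ((G ⇑w x - w x) - (G ⇑w x₀ - w x₀))) := by
      have e1 : Tendsto (fun k => G ⇑(v (φ k)) x) atTop (nhds (G ⇑w x)) :=
        hGconv.tendsto_at x
      have e2 : Tendsto (fun k => G ⇑(v (φ k)) x₀) atTop (nhds (G ⇑w x₀)) :=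
        hGconv.tendsto_at x₀
      have e3 : Tendsto (fun k => (v (φ k)) x) atTop (nhds (w x)) := huconv.tendsto_at x
      have e4 : Tendsto (fun k => (v (φ k)) x₀) atTop (nhds (w x₀)) := huconv.tendsto_at x₀
      exact (e1.sub e3).sub (e2.sub e4)
    have hlim2 : Tendsto a atTop (nhds 0) := by
      apply squeeze_zero_norm (fun k => hosc (φ k) x)
      have b1 : Tendsto (fun n : ℕ => (1/(n+1:ℝ))) atTop (nhds 0) :=
        tendsto_one_div_add_atTop_nhds_zero_nat
      have b2 : Tendsto (fun k : ℕ => (1/((φ k : ℕ)+1:ℝ))) atTop (nhds 0) :=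
        b1.comp hφ.tendsto_atTop
      have := b2.mul_const (2 * dist x x₀)
      simpa using this
    exact tendsto_nhds_unique hlim1 hlim2
  refine ⟨⇑w, G ⇑w x₀ - w x₀, hwK.1, fun x => ?_⟩
  have := hmain x
  linarith
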